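/- Let N ≥ 1 and let H_N be either the N×N Bessel Hessenberg matrix or the N×N modified Bessel Hessenberg matrix, and let K_N(H_N,e_1) = [e_1, H_N e_1, …, H_N^{N−1} e_1] be the (invertible) Krylov matrix. Then for every integer k ≥ N, ‖K_N(H_N,e_1)^{−1} H_N^{k} e_1‖ ≤ 2 √N (1 + √2)^N. -/

import Mathlib

/-- The Bessel Hessenberg matrix: `(H_N)_{1,2} = -1`, subdiagonal entries `1/2`,
superdiagonal entries `-1/2` (for rows `2 ≤ i ≤ N`), all indices here 1-based. -/
noncomputable def besselH (N : ℕ) : Matrix (Fin N) (Fin N) ℝ := fun i j =>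
  if (i : ℕ) = 0 ∧ (j : ℕ) = 1 then -1
  else if (j : ℕ) + 1 = (i : ℕ) then 1/2
  else if (i : ℕ) + 1 = (j : ℕ) ∧ 1 ≤ (i : ℕ) then -(1/2)
  else 0

/-- The modified Bessel Hessenberg matrix: `(H_N)_{1,2} = 1`, subdiagonal entries `1/2`,
superdiagonal entries `1/2` (for rows `2 ≤ i ≤ N`), all indices here 1-based. -/
noncomputable def modBesselH (N : ℕ) : Matrix (Fin N) (Fin N) ℝ := fun i j =>
  if (i : ℕ) = 0 ∧ (j : ℕ) = 1 then 1
  else if (j : ℕ) + 1 = (i : ℕ) then 1/2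
  else if (i : ℕ) + 1 = (j : ℕ) ∧ 1 ≤ (i : ℕ) then 1/2
  else 0

/-- The first standard basis vector of `ℝ^N`. -/
noncomputable def e1 (N : ℕ) : Fin N → ℝ := fun j => if (j : ℕ) = 0 then 1 else 0

/-- The Krylov matrix `K_N(H, e₁) = [e₁, H e₁, …, H^(N-1) e₁]`. -/
noncomputable def krylov {N : ℕ} (H : Matrix (Fin N) (Fin N) ℝ) : Matrix (Fin N) (Fin N) ℝ :=
  fun i j => (H ^ (j : ℕ)).mulVec (e1 N) i

/-- The Euclidean norm of a vector in `ℝ^N`. -/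
noncomputable def enorm' {N : ℕ} (v : Fin N → ℝ) : ℝ :=
  ‖(WithLp.equiv 2 (Fin N → ℝ)).symm v‖


namespace KrylovAux
open Matrix Finset

/-- generalized Hessenberg matrix -/
noncomputable def genH (N : ℕ) (σ : ℝ) : Matrix (Fin N) (Fin N) ℝ := fun i j =>
  if (i : ℕ) = 0 ∧ (j : ℕ) = 1 then σ
  else if (j : ℕ) + 1 = (i : ℕ) then 1/2
  else if (i : ℕ) + 1 = (j : ℕ) ∧ 1 ≤ (i : ℕ) then σ/2
  else 0

/-- ℕ-indexed unit vector -/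
def ue (N : ℕ) (j : ℕ) : Fin N → ℝ := fun i => if (i : ℕ) = j then 1 else 0

def shiftf (c : ℕ → ℝ) : ℕ → ℝ := fun i => match i with | 0 => 0 | (i+1) => c i

noncomputable def mm (σ : ℝ) : ℕ → ℕ → ℝ
  | 0 => fun i => if i = 0 then 1 else 0
  | 1 => fun i => if i = 1 then 2 else 0
  | (j+2) => fun i => 2 * shiftf (mm σ (j+1)) i - (if j = 0 then 2 else 1) * σ * mm σ j i

lemma mm_support (σ : ℝ) : ∀ j i, j < i → mm σ j i = 0
  | 0, i, h => by simp only [mm]; rw [if_neg]; omega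
  | 1, i, h => by simp only [mm]; rw [if_neg]; omega
  | (j+2), i, h => by
    match i, h with
    | (i'+1), h =>
      simp only [mm, shiftf]
      rw [mm_support σ (j+1) i' (by omega), mm_support σ j (i'+1) (by omega)]
      ring

lemma sum_ite_le {N : ℕ} {a : ℝ} (ha : 0 ≤ a) (P : Fin N → Prop) [DecidablePred P]
    (hP : ∀ j1 j2, P j1 → P j2 → j1 = j2) :
    ∑ j : Fin N, (if P j then a else 0) ≤ a := by
  classical
  calc ∑ j : Fin N, (if P j then a else 0) = ∑ _j ∈ Finset.univ.filter P, a :=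
        (Finset.sum_filter _ _).symm
    _ = ((Finset.univ.filter P).card : ℝ) * a := by rw [Finset.sum_const, nsmul_eq_mul]
    _ ≤ 1 * a := by
        have hc : (Finset.univ.filter P).card ≤ 1 := Finset.card_le_one.mpr
          (fun x hx y hy => hP x y (by simpa using hx) (by simpa using hy))
        exact mul_le_mul_of_nonneg_right (by exact_mod_cast hc) ha
    _ = a := one_mul a

lemma genH_rowsum {N : ℕ} (σ : ℝ) (hσ : |σ| ≤ 1) (i : Fin N) :
    ∑ j, |genH N σ i j| ≤ 1 := by
  have hpt : ∀ j : Fin N, |genH N σ i j| ≤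
      (if (j:ℕ)+1 = (i:ℕ) then (1:ℝ)/2 else 0) +
      (if (i:ℕ)+1 = (j:ℕ) then (if (i:ℕ) = 0 then (1:ℝ) else 1/2) else 0) := by
    intro j
    by_cases hA : (j:ℕ)+1 = (i:ℕ)
    · have h1 : ¬((i:ℕ) = 0 ∧ (j:ℕ) = 1) := by omega
      have hB : ¬((i:ℕ)+1 = (j:ℕ)) := by omega
      simp only [genH, if_neg h1, if_pos hA, if_neg hB]
      rw [abs_of_nonneg (by norm_num : (0:ℝ) ≤ 1/2)]
      norm_num
    · by_cases hB : (i:ℕ)+1 = (j:ℕ)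
      · by_cases h0 : (i:ℕ) = 0
        · have h1 : (i:ℕ) = 0 ∧ (j:ℕ) = 1 := by omega
          simp only [genH, if_pos h1, if_neg hA, if_pos hB, if_pos h0]
          linarith
        · have h1 : ¬((i:ℕ) = 0 ∧ (j:ℕ) = 1) := by omega
          have h3 : (i:ℕ)+1 = (j:ℕ) ∧ 1 ≤ (i:ℕ) := ⟨hB, by omega⟩
          simp only [genH, if_neg h1, if_neg hA, if_pos h3, if_pos hB, if_neg h0]
          have : |σ/2| = |σ|/2 := by rw [abs_div, abs_two]
          rw [this]; linarith
      · have h1 : ¬((i:ℕ) = 0 ∧ (j:ℕ) = 1) := by omega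
        have h3 : ¬((i:ℕ)+1 = (j:ℕ) ∧ 1 ≤ (i:ℕ)) := by omega
        simp only [genH, if_neg h1, if_neg hA, if_neg h3, if_neg hB, abs_zero]
        norm_num
  calc ∑ j, |genH N σ i j| ≤ ∑ j : Fin N,
      ((if (j:ℕ)+1 = (i:ℕ) then (1:ℝ)/2 else 0) +
      (if (i:ℕ)+1 = (j:ℕ) then (if (i:ℕ) = 0 then (1:ℝ) else 1/2) else 0)) :=
        Finset.sum_le_sum (fun j _ => hpt j)
    _ = (∑ j : Fin N, if (j:ℕ)+1 = (i:ℕ) then (1:ℝ)/2 else 0) +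
        (∑ j : Fin N, if (i:ℕ)+1 = (j:ℕ) then (if (i:ℕ) = 0 then (1:ℝ) else 1/2) else 0) :=
        Finset.sum_add_distrib
    _ ≤ 1 := by
        by_cases h0 : (i:ℕ) = 0
        · have e1' : (∑ j : Fin N, if (j:ℕ)+1 = (i:ℕ) then (1:ℝ)/2 else 0) = 0 := by
            apply Finset.sum_eq_zero; intro j _; rw [if_neg]; omega
          have e2 : (∑ j : Fin N, if (i:ℕ)+1 = (j:ℕ) then (if (i:ℕ) = 0 then (1:ℝ) else 1/2) else 0) ≤ 1 := by
            simp only [h0, if_pos rfl]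
            exact sum_ite_le (by norm_num) _ (fun j1 j2 h1 h2 => Fin.ext (by omega))
          linarith
        · have e1' : (∑ j : Fin N, if (j:ℕ)+1 = (i:ℕ) then (1:ℝ)/2 else 0) ≤ 1/2 :=
            sum_ite_le (by norm_num) _ (fun j1 j2 h1 h2 => Fin.ext (by omega))
          have e2 : (∑ j : Fin N, if (i:ℕ)+1 = (j:ℕ) then (if (i:ℕ) = 0 then (1:ℝ) else 1/2) else 0) ≤ 1/2 := by
            simp only [h0, if_neg h0]
            exact sum_ite_le (by norm_num) _ (fun j1 j2 h1 h2 => Fin.ext (by omega))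
          linarith

lemma pow_mulVec_e1_bound {N : ℕ} (σ : ℝ) (hσ : |σ| ≤ 1) (v : Fin N → ℝ)
    (hv : ∀ i, |v i| ≤ 1) (k : ℕ) (i : Fin N) :
    |((genH N σ ^ k).mulVec v) i| ≤ 1 := by
  induction k generalizing i v hv with
  | zero => simpa using hv i
  | succ k ih =>
    have hstep : ∀ (w : Fin N → ℝ), (∀ m, |w m| ≤ 1) → ∀ m, |(genH N σ).mulVec w m| ≤ 1 := by
      intro w hw m
      calc |(genH N σ).mulVec w m| = |∑ j, genH N σ m j * w j| := rfl
        _ ≤ ∑ j, |genH N σ m j * w j| := Finset.abs_sum_le_sum_abs _ _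
        _ ≤ ∑ j, |genH N σ m j| := Finset.sum_le_sum (fun j _ => by
            rw [abs_mul]
            calc |genH N σ m j| * |w j| ≤ |genH N σ m j| * 1 :=
              mul_le_mul_of_nonneg_left (hw j) (abs_nonneg _)
            _ = |genH N σ m j| := mul_one _)
        _ ≤ 1 := genH_rowsum σ hσ m
    rw [pow_succ, ← Matrix.mulVec_mulVec]
    exact ih _ (hstep v hv) i

lemma e1_abs_le {N : ℕ} (i : Fin N) : |(if ((i:ℕ) = 0) then (1:ℝ) else 0)| ≤ 1 := by
  split_ifs <;> norm_num

lemma sqrt2_facts : 1 ≤ Real.sqrt 2 ∧ Real.sqrt 2 * Real.sqrt 2 = 2 :=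
  ⟨by rw [show (1:ℝ) = Real.sqrt 1 from (Real.sqrt_one).symm];
      exact Real.sqrt_le_sqrt (by norm_num),
   Real.mul_self_sqrt (by norm_num)⟩

lemma mm_l1 (σ : ℝ) (hσ : |σ| ≤ 1) :
    ∀ j, ∑ i ∈ Finset.range (j+1), |mm σ j i| ≤ 2 * (1 + Real.sqrt 2)^j
  | 0 => by simp [mm]
  | 1 => by
      rw [Finset.sum_range_succ, Finset.sum_range_one]
      have h1 := sqrt2_facts.1
      simp only [mm]
      norm_num
      try nlinarith
  | 2 => by
      rw [Finset.sum_range_succ, Finset.sum_range_succ, Finset.sum_range_one]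
      have h1 := sqrt2_facts.1
      have h2 := sqrt2_facts.2
      simp only [mm, shiftf]
      norm_num
      have : |(2:ℝ) * σ| ≤ 2 := by rw [abs_mul]; rw [abs_two]; nlinarith [abs_nonneg σ]
      nlinarith [abs_nonneg ((2:ℝ)*σ)]
  | (j+3) => by
      have ih1 := mm_l1 σ hσ (j+2)
      have ih2 := mm_l1 σ hσ (j+1)
      have hs1 := sqrt2_facts.1
      have hs2 := sqrt2_facts.2
      -- mm σ (j+3) i = 2 * shiftf (mm σ (j+2)) i - σ * mm σ (j+1) i
      have hexp : ∀ i, mm σ (j+3) i = 2 * shiftf (mm σ (j+2)) i - σ * mm σ (j+1) i := by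
        intro i
        show mm σ ((j+1)+2) i = _
        simp only [mm]
        rw [if_neg (by omega : ¬ (j+1 = 0))]
        ring
      have step1 : ∑ i ∈ Finset.range (j+4), |mm σ (j+3) i| ≤
          2 * (∑ i ∈ Finset.range (j+4), |shiftf (mm σ (j+2)) i|) +
          |σ| * (∑ i ∈ Finset.range (j+4), |mm σ (j+1) i|) := by
        rw [Finset.mul_sum, Finset.mul_sum, ← Finset.sum_add_distrib]
        apply Finset.sum_le_sum
        intro i _
        rw [hexp i]
        calc |2 * shiftf (mm σ (j+2)) i - σ * mm σ (j+1) i|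
            ≤ |2 * shiftf (mm σ (j+2)) i| + |σ * mm σ (j+1) i| := abs_sub _ _
          _ = 2 * |shiftf (mm σ (j+2)) i| + |σ| * |mm σ (j+1) i| := by
              rw [abs_mul, abs_mul, abs_two]
      have e1' : ∑ i ∈ Finset.range (j+4), |shiftf (mm σ (j+2)) i| =
          ∑ i ∈ Finset.range (j+3), |mm σ (j+2) i| := by
        rw [Finset.sum_range_succ' (fun i => |shiftf (mm σ (j+2)) i|) (j+3)]
        simp [shiftf]
      have e2 : ∑ i ∈ Finset.range (j+4), |mm σ (j+1) i| =
          ∑ i ∈ Finset.range (j+2), |mm σ (j+1) i| := by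
        rw [Finset.sum_range_succ, Finset.sum_range_succ,
            mm_support σ (j+1) (j+2) (by omega), mm_support σ (j+1) (j+3) (by omega)]
        simp
      rw [e1', e2] at step1
      have habs : |σ| * (∑ i ∈ Finset.range (j+2), |mm σ (j+1) i|) ≤
          ∑ i ∈ Finset.range (j+2), |mm σ (j+1) i| := by
        have hnn : 0 ≤ ∑ i ∈ Finset.range (j+2), |mm σ (j+1) i| :=
          Finset.sum_nonneg (fun i _ => abs_nonneg _)
        nlinarith
      have key : (2:ℝ) * (2 * (1 + Real.sqrt 2)^(j+2)) + 2 * (1 + Real.sqrt 2)^(j+1) =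
          2 * (1 + Real.sqrt 2)^(j+3) := by
        have : ∀ m : ℕ, (1 + Real.sqrt 2)^(m+1) = (1 + Real.sqrt 2)^m * (1 + Real.sqrt 2) :=
          fun m => pow_succ _ m
        rw [this (j+2), this (j+1), this j]
        linear_combination (-2 * (1 + Real.sqrt 2)^j * (1 + Real.sqrt 2)) * hs2
      calc ∑ i ∈ Finset.range (j+3+1), |mm σ (j+3) i|
          ≤ 2 * (∑ i ∈ Finset.range (j+3), |mm σ (j+2) i|) +
            |σ| * (∑ i ∈ Finset.range (j+2), |mm σ (j+1) i|) := step1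
        _ ≤ 2 * (2 * (1 + Real.sqrt 2)^(j+2)) + 2 * (1 + Real.sqrt 2)^(j+1) := by
            have := habs
            nlinarith [ih1, ih2]
        _ = 2 * (1 + Real.sqrt 2)^(j+3) := key

lemma ue_eq_zero {N : ℕ} {j : ℕ} (h : N ≤ j) : ue N j = 0 := by
  funext i; simp only [ue]; rw [if_neg (by omega : ¬ (i:ℕ) = j)]; rfl

lemma mulVec_ue {N : ℕ} (A : Matrix (Fin N) (Fin N) ℝ) (j : ℕ) (hj : j < N) :
    A.mulVec (ue N j) = fun i => A i ⟨j, hj⟩ := by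
  funext i
  show ∑ m : Fin N, A i m * ue N j m = A i ⟨j, hj⟩
  have key : ∀ m : Fin N, A i m * ue N j m = if m = ⟨j, hj⟩ then A i m else 0 := by
    intro m
    simp only [ue, Fin.ext_iff]
    split_ifs <;> simp
  rw [Finset.sum_congr rfl (fun m _ => key m)]
  simp

lemma col0 {N : ℕ} (σ : ℝ) (hN : 0 < N) :
    (genH N σ).mulVec (ue N 0) = (1/2 : ℝ) • ue N 1 := by
  rw [mulVec_ue _ 0 hN]
  funext i
  simp only [genH, ue, Pi.smul_apply, smul_eq_mul, Fin.val_mk]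
  split_ifs <;> first | (exfalso; omega) | (exfalso; simp_all; done) | (exfalso; simp_all; omega) | (norm_num; done) | (ring1; done)

lemma col1 {N : ℕ} (σ : ℝ) (hN : 1 < N) :
    (genH N σ).mulVec (ue N 1) = σ • ue N 0 + (1/2 : ℝ) • ue N 2 := by
  rw [mulVec_ue _ 1 hN]
  funext i
  simp only [genH, ue, Pi.add_apply, Pi.smul_apply, smul_eq_mul, Fin.val_mk]
  split_ifs <;> first | (exfalso; omega) | (exfalso; simp_all; done) | (exfalso; simp_all; omega) | (norm_num; done) | (ring1; done)

lemma colg {N : ℕ} (σ : ℝ) (j : ℕ) (h2 : 2 ≤ j) (hjN : j < N) :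
    (genH N σ).mulVec (ue N j) = (σ/2) • ue N (j-1) + (1/2 : ℝ) • ue N (j+1) := by
  rw [mulVec_ue _ j hjN]
  funext i
  simp only [genH, ue, Pi.add_apply, Pi.smul_apply, smul_eq_mul, Fin.val_mk]
  split_ifs <;> first | (exfalso; omega) | (norm_num; done) | (ring1; done)

def vecN (N : ℕ) (c : ℕ → ℝ) : Fin N → ℝ := fun i => c (i : ℕ)

lemma krylov_mulVec {N : ℕ} (H : Matrix (Fin N) (Fin N) ℝ) (c : ℕ → ℝ) :
    (krylov H).mulVec (vecN N c) = ∑ j ∈ Finset.range N, c j • (H ^ j).mulVec (e1 N) := by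
  funext i
  have lhs : (krylov H).mulVec (vecN N c) i
      = ∑ j : Fin N, (H ^ (j:ℕ)).mulVec (e1 N) i * c (j:ℕ) := rfl
  rw [lhs, Fin.sum_univ_eq_sum_range (fun j => (H ^ j).mulVec (e1 N) i * c j) N,
    Finset.sum_apply]
  exact Finset.sum_congr rfl (fun j _ => by simp [mul_comm])

lemma mulVec_sum_smul {N : ℕ} (H : Matrix (Fin N) (Fin N) ℝ) (s : Finset ℕ) (a : ℕ → ℝ)
    (v : ℕ → Fin N → ℝ) :
    H.mulVec (∑ j ∈ s, a j • v j) = ∑ j ∈ s, a j • H.mulVec (v j) := by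
  rw [← Matrix.mulVecLin_apply, map_sum]
  exact Finset.sum_congr rfl (fun j _ => by rw [_root_.map_smul, Matrix.mulVecLin_apply])

lemma krylov_shift {N : ℕ} (H : Matrix (Fin N) (Fin N) ℝ) (hN : 0 < N) (c : ℕ → ℝ)
    (hc : c (N-1) = 0) :
    (krylov H).mulVec (vecN N (shiftf c)) = H.mulVec ((krylov H).mulVec (vecN N c)) := by
  rw [krylov_mulVec, krylov_mulVec]
  obtain ⟨M, rfl⟩ : ∃ M, N = M + 1 := ⟨N-1, by omega⟩
  simp only [Nat.add_sub_cancel] at hc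
  rw [Finset.sum_range_succ' (fun j => shiftf c j • (H ^ j).mulVec (e1 (M+1))) M]
  rw [Finset.sum_range_succ (fun j => c j • (H ^ j).mulVec (e1 (M+1))) M]
  rw [hc]
  simp only [shiftf, zero_smul, add_zero]
  rw [mulVec_sum_smul]
  exact Finset.sum_congr rfl (fun j _ => by
    rw [Matrix.mulVec_mulVec, ← pow_succ'])

lemma mulVec_smul_sub {N : ℕ} (A : Matrix (Fin N) (Fin N) ℝ) (a b : ℝ) (u v : Fin N → ℝ) :
    A.mulVec (a • u - b • v) = a • A.mulVec u - b • A.mulVec v := by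
  funext i
  simp only [Matrix.mulVec, dotProduct, Pi.sub_apply, Pi.smul_apply, smul_eq_mul,
    Finset.mul_sum]
  rw [← Finset.sum_sub_distrib]
  exact Finset.sum_congr rfl (fun j _ => by ring)

lemma K_mm {N : ℕ} (σ : ℝ) : ∀ j, j < N →
    (krylov (genH N σ)).mulVec (vecN N (mm σ j)) = ue N j
  | 0, hj => by
    rw [krylov_mulVec]
    rw [Finset.sum_eq_single 0]
    · have h1 : mm σ 0 0 = 1 := by simp [mm]
      rw [h1, pow_zero, Matrix.one_mulVec, one_smul]
      rfl
    · intro b _ hb0; simp only [mm, if_neg hb0, zero_smul]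
    · intro h; exact absurd (Finset.mem_range.mpr hj) h
  | 1, hj => by
    rw [krylov_mulVec]
    rw [Finset.sum_eq_single 1]
    · have h1 : mm σ 1 1 = 2 := by simp [mm]
      rw [h1, pow_one, show e1 N = ue N 0 from rfl, col0 σ (by omega : 0 < N)]
      funext i
      simp only [Pi.smul_apply, smul_eq_mul]
      ring
    · intro b _ hb0; simp only [mm, if_neg hb0, zero_smul]
    · intro h; exact absurd (Finset.mem_range.mpr hj) h
  | (j+2), hj => by
    have hexp : vecN N (mm σ (j+2)) =
        (2:ℝ) • vecN N (shiftf (mm σ (j+1))) - ((if j = 0 then (2:ℝ) else 1) * σ) • vecN N (mm σ j) := by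
      funext i
      simp only [vecN, mm, Pi.sub_apply, Pi.smul_apply, smul_eq_mul]
      try ring
    have hsupp : mm σ (j+1) (N-1) = 0 := mm_support σ (j+1) (N-1) (by omega)
    have ih1 := K_mm (N := N) σ (j+1) (by omega : j+1 < N)
    have ih0 := K_mm (N := N) σ j (by omega : j < N)
    rw [hexp]
    rw [mulVec_smul_sub]
    rw [krylov_shift (genH N σ) (by omega) (mm σ (j+1)) hsupp, ih1, ih0]
    by_cases hj0 : j = 0
    · subst hj0
      rw [if_pos rfl, col1 σ (by omega)]
      funext i
      simp only [Pi.add_apply, Pi.sub_apply, Pi.smul_apply, smul_eq_mul]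
      ring
    · rw [if_neg hj0, colg σ (j+1) (by omega) (by omega)]
      have : j + 1 - 1 = j := by omega
      rw [this]
      funext i
      simp only [Pi.add_apply, Pi.sub_apply, Pi.smul_apply, smul_eq_mul]
      ring

noncomputable def MM (N : ℕ) (σ : ℝ) : Matrix (Fin N) (Fin N) ℝ :=
  Matrix.of (fun i j : Fin N => mm σ (j : ℕ) (i : ℕ))

lemma K_mul_MM {N : ℕ} (σ : ℝ) : krylov (genH N σ) * MM N σ = 1 := by
  ext i j
  have h := congrFun (K_mm σ (j:ℕ) j.isLt) i
  have lhs : (krylov (genH N σ) * MM N σ) i j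
      = (krylov (genH N σ)).mulVec (vecN N (mm σ (j:ℕ))) i := by
    rw [Matrix.mul_apply]
    rfl
  rw [lhs, h]
  by_cases hij : i = j
  · subst hij; simp [ue, Matrix.one_apply]
  · have hne : ¬((i:ℕ) = (j:ℕ)) := fun hc => hij (Fin.ext hc)
    simp [ue, Matrix.one_apply, hij, hne]

end KrylovAux


lemma bessel_eq_genH (N : ℕ) : besselH N = KrylovAux.genH N (-1) := by
  funext i j
  simp only [besselH, KrylovAux.genH]
  split_ifs <;> norm_num

lemma modBessel_eq_genH (N : ℕ) : modBesselH N = KrylovAux.genH N 1 := by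
  funext i j
  simp only [modBesselH, KrylovAux.genH]

lemma enorm'_sum_le {N : ℕ} {ι : Type*} (s : Finset ι) (f : ι → Fin N → ℝ) :
    enorm' (∑ m ∈ s, f m) ≤ ∑ m ∈ s, enorm' (f m) := by
  unfold enorm'
  have h : (WithLp.equiv 2 (Fin N → ℝ)).symm (∑ m ∈ s, f m)
      = ∑ m ∈ s, (WithLp.equiv 2 (Fin N → ℝ)).symm (f m) := WithLp.toLp_sum _ _ s f
  rw [h]
  exact norm_sum_le _ _

lemma enorm'_smul {N : ℕ} (a : ℝ) (v : Fin N → ℝ) : enorm' (a • v) = |a| * enorm' v := by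
  unfold enorm'
  have h : (WithLp.equiv 2 (Fin N → ℝ)).symm (a • v)
      = a • (WithLp.equiv 2 (Fin N → ℝ)).symm v := rfl
  rw [h, norm_smul, Real.norm_eq_abs]

lemma enorm'_le_sum_abs {N : ℕ} (u : Fin N → ℝ) : enorm' u ≤ ∑ i, |u i| := by
  unfold enorm'
  rw [EuclideanSpace.norm_eq]
  have h1 : ∑ i, ‖u i‖^2 ≤ (∑ i, |u i|)^2 := by
    rw [sq (∑ i, |u i|)]
    calc ∑ i, ‖u i‖^2 = ∑ i, |u i| * |u i| := by
          exact Finset.sum_congr rfl (fun i _ => by rw [Real.norm_eq_abs, sq])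
      _ ≤ ∑ i, |u i| * (∑ j, |u j|) := Finset.sum_le_sum (fun i _ =>
          mul_le_mul_of_nonneg_left
            (Finset.single_le_sum (f := fun j : Fin N => |u j|)
              (fun j _ => abs_nonneg _) (Finset.mem_univ i)) (abs_nonneg _))
      _ = (∑ i, |u i|) * (∑ j, |u j|) := by rw [← Finset.sum_mul]
  calc Real.sqrt (∑ i, ‖u i‖^2) ≤ Real.sqrt ((∑ i, |u i|)^2) := Real.sqrt_le_sqrt h1
    _ = ∑ i, |u i| := Real.sqrt_sq (Finset.sum_nonneg (fun i _ => abs_nonneg _))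

/-- If `H_N` is the Bessel or the modified Bessel Hessenberg matrix, then the Krylov matrix
`K_N(H_N, e₁)` is invertible and for every `k ≥ N`,
`‖K_N(H_N, e₁)⁻¹ H_N^k e₁‖ ≤ 2 √N (1 + √2)^N`. -/
theorem krylov_inverse_power_bound (N : ℕ) (hN : 1 ≤ N)
    (H : Matrix (Fin N) (Fin N) ℝ) (hH : H = besselH N ∨ H = modBesselH N) :
    IsUnit (krylov H) ∧
    ∀ k : ℕ, N ≤ k →
      enorm' ((krylov H)⁻¹.mulVec ((H ^ k).mulVec (e1 N))) ≤
        2 * Real.sqrt N * (1 + Real.sqrt 2) ^ N := by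
  obtain ⟨σ, hσ, hHg⟩ : ∃ σ : ℝ, |σ| ≤ 1 ∧ H = KrylovAux.genH N σ := by
    rcases hH with h | h
    · exact ⟨-1, by norm_num, by rw [h, bessel_eq_genH]⟩
    · exact ⟨1, by norm_num, by rw [h, modBessel_eq_genH]⟩
  subst hHg
  have hKinv := Matrix.inv_eq_right_inv (KrylovAux.K_mul_MM (N := N) σ)
  refine ⟨(Matrix.isUnit_iff_isUnit_det _).mpr (Matrix.isUnit_det_of_right_inverse (B := KrylovAux.MM N σ) (KrylovAux.K_mul_MM σ)), ?_⟩
  intro k _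
  rw [hKinv]
  set v : Fin N → ℝ := (KrylovAux.genH N σ ^ k).mulVec (e1 N) with hv
  have hventry : ∀ i, |v i| ≤ 1 := by
    intro i
    apply KrylovAux.pow_mulVec_e1_bound σ hσ (e1 N) (fun i' => ?_) k i
    simp only [e1]; split_ifs <;> norm_num
  have hMv : (KrylovAux.MM N σ).mulVec v
      = ∑ m : Fin N, v m • KrylovAux.vecN N (KrylovAux.mm σ (m:ℕ)) := by
    funext i
    show ∑ m : Fin N, KrylovAux.MM N σ i m * v m = _
    rw [Finset.sum_apply]
    exact Finset.sum_congr rfl (fun m _ => by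
      simp [KrylovAux.MM, KrylovAux.vecN, mul_comm])
  rw [hMv]
  have hs1 : 1 ≤ Real.sqrt 2 := KrylovAux.sqrt2_facts.1
  have hp0 : (0:ℝ) ≤ (1 + Real.sqrt 2)^N := pow_nonneg (by linarith) N
  calc enorm' (∑ m : Fin N, v m • KrylovAux.vecN N (KrylovAux.mm σ (m:ℕ)))
      ≤ ∑ m : Fin N, enorm' (v m • KrylovAux.vecN N (KrylovAux.mm σ (m:ℕ))) :=
        enorm'_sum_le _ _
    _ ≤ ∑ m : Fin N, 2 * (1 + Real.sqrt 2) ^ (m:ℕ) := by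
        apply Finset.sum_le_sum
        intro m _
        rw [enorm'_smul]
        have h1 : enorm' (KrylovAux.vecN N (KrylovAux.mm σ (m:ℕ)))
            ≤ 2 * (1 + Real.sqrt 2)^(m:ℕ) := by
          have hstep : ∑ i : Fin N, |KrylovAux.vecN N (KrylovAux.mm σ (m:ℕ)) i|
              ≤ ∑ i ∈ Finset.range ((m:ℕ)+1), |KrylovAux.mm σ (m:ℕ) i| := by
            have e1' : ∑ i : Fin N, |KrylovAux.vecN N (KrylovAux.mm σ (m:ℕ)) i|
                = ∑ i ∈ Finset.range N, |KrylovAux.mm σ (m:ℕ) i| :=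
              Fin.sum_univ_eq_sum_range (fun i => |KrylovAux.mm σ (m:ℕ) i|) N
            rw [e1']
            have hsub1 : Finset.range N ⊆ Finset.range (max N ((m:ℕ)+1)) :=
              Finset.range_subset_range.mpr (le_max_left _ _)
            have hsub2 : Finset.range ((m:ℕ)+1) ⊆ Finset.range (max N ((m:ℕ)+1)) :=
              Finset.range_subset_range.mpr (le_max_right _ _)
            calc ∑ i ∈ Finset.range N, |KrylovAux.mm σ (m:ℕ) i|
                ≤ ∑ i ∈ Finset.range (max N ((m:ℕ)+1)), |KrylovAux.mm σ (m:ℕ) i| :=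
                  Finset.sum_le_sum_of_subset_of_nonneg hsub1 (fun _ _ _ => abs_nonneg _)
              _ = ∑ i ∈ Finset.range ((m:ℕ)+1), |KrylovAux.mm σ (m:ℕ) i| := by
                  refine (Finset.sum_subset hsub2 ?_).symm
                  intro x _ hx
                  rw [KrylovAux.mm_support σ (m:ℕ) x
                    (by simp only [Finset.mem_range] at hx; omega), abs_zero]
          calc enorm' (KrylovAux.vecN N (KrylovAux.mm σ (m:ℕ)))
              ≤ ∑ i : Fin N, |KrylovAux.vecN N (KrylovAux.mm σ (m:ℕ)) i| :=
                enorm'_le_sum_abs _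
            _ ≤ ∑ i ∈ Finset.range ((m:ℕ)+1), |KrylovAux.mm σ (m:ℕ) i| := hstep
            _ ≤ 2 * (1 + Real.sqrt 2)^(m:ℕ) := KrylovAux.mm_l1 σ hσ (m:ℕ)
        have henn : 0 ≤ enorm' (KrylovAux.vecN N (KrylovAux.mm σ (m:ℕ))) := norm_nonneg _
        calc |v m| * enorm' (KrylovAux.vecN N (KrylovAux.mm σ (m:ℕ)))
            ≤ 1 * (2 * (1 + Real.sqrt 2)^(m:ℕ)) :=
              mul_le_mul (hventry m) h1 henn zero_le_one
          _ = 2 * (1 + Real.sqrt 2)^(m:ℕ) := one_mul _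
    _ ≤ 2 * Real.sqrt N * (1 + Real.sqrt 2) ^ N := by
        rw [Fin.sum_univ_eq_sum_range (fun m => 2 * (1 + Real.sqrt 2)^m) N]
        rw [← Finset.mul_sum]
        have hgeom : ∑ m ∈ Finset.range N, (1 + Real.sqrt 2)^m
            = ((1 + Real.sqrt 2)^N - 1)/(1 + Real.sqrt 2 - 1) :=
          geom_sum_eq (by intro hc; nlinarith) N
        rw [hgeom]
        have hsN : 1 ≤ Real.sqrt N := by
          rw [show (1:ℝ) = Real.sqrt 1 from (Real.sqrt_one).symm]
          exact Real.sqrt_le_sqrt (by exact_mod_cast hN)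
        have hd : ((1 + Real.sqrt 2)^N - 1)/(1 + Real.sqrt 2 - 1) ≤ (1 + Real.sqrt 2)^N := by
          rw [div_le_iff₀ (by linarith)]
          nlinarith
        nlinarith [Real.sqrt_nonneg (N:ℝ)]
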